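/- m-dimensional Loss-Yau identity: let γ₁,…,γ_m be Hermitian ℓ×ℓ matrices with γⱼγ_k + γ_kγⱼ = 2δ_{jk}I, and define ψ(x) = (1+|x|²)^{-m/2}(I + i x·γ)φ₀ with φ₀ = (1,0,…,0)ᵀ ∈ ℂ^ℓ. Then |ψ(x)| = (1+|x|²)^{-(m-1)/2} and (γ·p)ψ(x) = m(1+|x|²)^{-1}ψ(x). -/

import Mathlib

open MeasureTheory Real
open scoped ENNReal

noncomputable section

open Matrix in
private lemma sum_mulVec' {n k : Type*} [Fintype n] (s : Finset k)
    (M : k → Matrix n n ℂ) (v : n → ℂ) :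
    (∑ j ∈ s, M j) *ᵥ v = ∑ j ∈ s, M j *ᵥ v :=
  map_sum (Matrix.mulVec.addMonoidHomLeft v) M s

def gammaP {m ℓ : ℕ} (γ : Fin m → Matrix (Fin ℓ) (Fin ℓ) ℂ)
    (f : EuclideanSpace ℝ (Fin m) → EuclideanSpace ℂ (Fin ℓ))
    (x : EuclideanSpace ℝ (Fin m)) : EuclideanSpace ℂ (Fin ℓ) :=
  (WithLp.equiv 2 (Fin ℓ → ℂ)).symm
    (-Complex.I • ∑ j : Fin m, (γ j).mulVec
      (WithLp.equiv 2 (Fin ℓ → ℂ) (fderiv ℝ f x (EuclideanSpace.single j 1))))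

def psiM {m ℓ : ℕ} (hl : 0 < ℓ) (γ : Fin m → Matrix (Fin ℓ) (Fin ℓ) ℂ)
    (x : EuclideanSpace ℝ (Fin m)) : EuclideanSpace ℂ (Fin ℓ) :=
  (WithLp.equiv 2 (Fin ℓ → ℂ)).symm
    ((((1 + ‖x‖ ^ 2) ^ (-(m:ℝ)/2) : ℝ) : ℂ) •
      ((1 : Matrix (Fin ℓ) (Fin ℓ) ℂ) +
        Complex.I • ∑ j : Fin m, ((x j : ℝ) : ℂ) • γ j).mulVec
          (Pi.single ⟨0, hl⟩ 1))

open Matrix in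
set_option maxHeartbeats 1000000 in
theorem loss_yau_m_dim (m ℓ : ℕ) (hl : 0 < ℓ)
    (γ : Fin m → Matrix (Fin ℓ) (Fin ℓ) ℂ)
    (hherm : ∀ j, (γ j).IsHermitian)
    (hanti : ∀ j k, γ j * γ k + γ k * γ j =
      if j = k then (2:ℂ) • (1 : Matrix (Fin ℓ) (Fin ℓ) ℂ) else 0) :
    ∀ x : EuclideanSpace ℝ (Fin m),
      ‖psiM hl γ x‖ = (1 + ‖x‖ ^ 2) ^ (-((m:ℝ) - 1)/2) ∧
      gammaP γ (psiM hl γ) x = ((m / (1 + ‖x‖ ^ 2) : ℝ)) • psiM hl γ x := by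
  intro x
  set r2 : ℝ := 1 + ‖x‖ ^ 2 with hr2
  have hr2pos : 0 < r2 := by positivity
  set p : ℝ := -(m:ℝ)/2 with hp
  set c : ℝ := r2 ^ p with hc
  set s : ℝ := r2 ^ (p - 1) with hs
  set i0 : Fin ℓ := ⟨0, hl⟩
  set φ : Fin ℓ → ℂ := Pi.single i0 1 with hφ
  set A : Matrix (Fin ℓ) (Fin ℓ) ℂ := ∑ j, ((x j : ℝ) : ℂ) • γ j with hA
  set u : Fin ℓ → ℂ := A *ᵥ φ with hu
  set v : Fin ℓ → ℂ := φ + Complex.I • u with hv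
  set w : Fin m → (Fin ℓ → ℂ) := fun j => γ j *ᵥ φ with hw
  -- basic algebra
  have hγsq : ∀ j, γ j * γ j = (1 : Matrix (Fin ℓ) (Fin ℓ) ℂ) := by
    intro j
    have h := hanti j j
    rw [if_pos rfl] at h
    have h2 : (2:ℂ) • (γ j * γ j) = (2:ℂ) • (1 : Matrix (Fin ℓ) (Fin ℓ) ℂ) := by
      rw [two_smul]; exact h
    exact smul_right_injective _ two_ne_zero h2
  have hx2 : ‖x‖ ^ 2 = ∑ j, x j ^ 2 := by
    rw [EuclideanSpace.norm_eq, Real.sq_sqrt (by positivity)]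
    simp [Real.norm_eq_abs, sq_abs]
  have hAsq : A * A = ((‖x‖ ^ 2 : ℝ) : ℂ) • (1 : Matrix (Fin ℓ) (Fin ℓ) ℂ) := by
    have e1 : A * A = ∑ j, ∑ k, (((x j : ℝ) : ℂ) * ((x k : ℝ) : ℂ)) • (γ j * γ k) := by
      rw [hA, Finset.sum_mul_sum]
      exact Finset.sum_congr rfl fun j _ => Finset.sum_congr rfl fun k _ => by
        rw [smul_mul_assoc, mul_smul_comm, smul_smul]
    have e2 : A * A = ∑ j, ∑ k, (((x j : ℝ) : ℂ) * ((x k : ℝ) : ℂ)) • (γ k * γ j) := by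
      rw [e1, Finset.sum_comm]
      exact Finset.sum_congr rfl fun j _ => Finset.sum_congr rfl fun k _ => by
        rw [mul_comm (((x k : ℝ) : ℂ)) (((x j : ℝ) : ℂ))]
    have h2 : (2:ℂ) • (A * A) = (2:ℂ) • (((‖x‖ ^ 2 : ℝ) : ℂ) • (1 : Matrix (Fin ℓ) (Fin ℓ) ℂ)) := by
      calc (2:ℂ) • (A * A) = A * A + A * A := (two_smul ℂ _)
        _ = ∑ j, ∑ k, (((x j : ℝ) : ℂ) * ((x k : ℝ) : ℂ)) • (γ j * γ k + γ k * γ j) := by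
            nth_rewrite 1 [e1] ; nth_rewrite 1 [e2]
            rw [← Finset.sum_add_distrib]
            exact Finset.sum_congr rfl fun j _ => by
              rw [← Finset.sum_add_distrib]
              exact Finset.sum_congr rfl fun k _ => (smul_add _ _ _).symm
        _ = ∑ j, (((x j : ℝ) : ℂ) * ((x j : ℝ) : ℂ)) • ((2:ℂ) • (1 : Matrix (Fin ℓ) (Fin ℓ) ℂ)) := by
            refine Finset.sum_congr rfl fun j _ => ?_
            rw [Finset.sum_eq_single j]
            · rw [hanti j j, if_pos rfl]
            · intro k _ hk
              rw [hanti j k, if_neg (fun h => hk h.symm), smul_zero]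
            · intro h ; exact absurd (Finset.mem_univ j) h
        _ = (2:ℂ) • (((‖x‖ ^ 2 : ℝ) : ℂ) • (1 : Matrix (Fin ℓ) (Fin ℓ) ℂ)) := by
            rw [hx2]
            rw [← Finset.sum_smul]
            rw [smul_comm]
            congr 1
            push_cast
            congr 1
            exact Finset.sum_congr rfl fun j _ => by ring
    exact smul_right_injective _ two_ne_zero h2
  have hAH : Aᴴ = A := by
    rw [hA, Matrix.conjTranspose_sum]
    refine Finset.sum_congr rfl fun j _ => ?_
    rw [Matrix.conjTranspose_smul, (hherm j)]
    simp [Complex.conj_ofReal]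
  have hu' : u = ∑ j, ((x j : ℝ) : ℂ) • w j := by
    rw [hu, hA, sum_mulVec']
    exact Finset.sum_congr rfl fun j _ => Matrix.smul_mulVec _ _ _
  -- dot products
  have hφstar : star φ = φ := by
    funext i
    simp [hφ, Pi.single_apply, apply_ite (star : ℂ → ℂ)]
  have hφφ : star φ ⬝ᵥ φ = 1 := by
    rw [hφstar, hφ, single_dotProduct]
    simp
  have huφ : star u ⬝ᵥ φ = star φ ⬝ᵥ u := by
    rw [hu, Matrix.star_mulVec, hAH, ← Matrix.dotProduct_mulVec]
  have huu : star u ⬝ᵥ u = ((‖x‖ ^ 2 : ℝ) : ℂ) := by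
    rw [hu, Matrix.star_mulVec, hAH, ← Matrix.dotProduct_mulVec, Matrix.mulVec_mulVec,
      hAsq, Matrix.smul_mulVec, Matrix.one_mulVec, dotProduct_smul, hφφ]
    simp
  have hvv : star v ⬝ᵥ v = (r2 : ℂ) := by
    have expand : star v ⬝ᵥ v = star φ ⬝ᵥ φ + Complex.I * (star φ ⬝ᵥ u)
        + (-Complex.I) * (star u ⬝ᵥ φ) + (-Complex.I) * Complex.I * (star u ⬝ᵥ u) := by
      simp only [hv, star_add, star_smul, add_dotProduct, dotProduct_add,
        smul_dotProduct, dotProduct_smul, Complex.star_def, Complex.conj_I,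
        neg_dotProduct, dotProduct_neg, smul_eq_mul, neg_mul, neg_smul]
      ring
    rw [expand, hφφ, huφ, huu, hr2]
    push_cast
    rw [show (-Complex.I) * Complex.I = 1 by simp [Complex.I_mul_I]]
    ring
  have hpsix : psiM hl γ x = (WithLp.equiv 2 (Fin ℓ → ℂ)).symm (((c:ℝ):ℂ) • v) := by
    rw [psiM]
    congr 1
    rw [← hr2, ← hp, ← hc, ← hA, ← hφ]
    congr 1
    rw [Matrix.add_mulVec, Matrix.one_mulVec, Matrix.smul_mulVec, hv, hu]
  have hnormvE : ‖(WithLp.equiv 2 (Fin ℓ → ℂ)).symm v‖ = Real.sqrt r2 := by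
    have h2 := inner_self_eq_norm_sq_to_K (𝕜 := ℂ) ((WithLp.equiv 2 (Fin ℓ → ℂ)).symm v)
    rw [show inner ℂ ((WithLp.equiv 2 (Fin ℓ → ℂ)).symm v) ((WithLp.equiv 2 (Fin ℓ → ℂ)).symm v)
        = star v ⬝ᵥ v from by rw [dotProduct_comm]; rfl, hvv, ← RCLike.ofReal_pow] at h2
    have h2' : r2 = ‖(WithLp.equiv 2 (Fin ℓ → ℂ)).symm v‖ ^ 2 := RCLike.ofReal_injective (K := ℂ) h2
    rw [h2', Real.sqrt_sq (norm_nonneg _)]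
  have part1 : ‖psiM hl γ x‖ = (1 + ‖x‖ ^ 2) ^ (-((m:ℝ) - 1)/2) := by
    rw [hpsix]
    rw [show (WithLp.equiv 2 (Fin ℓ → ℂ)).symm (((c:ℝ):ℂ) • v)
        = ((c:ℝ):ℂ) • (WithLp.equiv 2 (Fin ℓ → ℂ)).symm v from rfl]
    rw [norm_smul, hnormvE, Complex.norm_real, Real.norm_eq_abs,
      abs_of_nonneg (Real.rpow_nonneg hr2pos.le _)]
    rw [Real.sqrt_eq_rpow, ← Real.rpow_add hr2pos, ← hr2]
    congr 1
    rw [hp]; ring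
  -- derivative part
  have hr2d : HasFDerivAt (fun y : EuclideanSpace ℝ (Fin m) => 1 + ‖y‖ ^ 2) ((2:ℕ) • (innerSL ℝ x)) x := by
    have h0 := (hasFDerivAt_id x).norm_sq
    simpa using h0.const_add 1
  have hcd : HasFDerivAt (fun y : EuclideanSpace ℝ (Fin m) => (1 + ‖y‖ ^ 2) ^ p)
      ((p * r2 ^ (p - 1)) • ((2:ℕ) • innerSL ℝ x)) x := by
    have h1 : HasDerivAt (fun t : ℝ => t ^ p) (p * r2 ^ (p - 1)) r2 :=
      Real.hasDerivAt_rpow_const (Or.inl hr2pos.ne')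
    exact h1.comp_hasFDerivAt x hr2d
  set cdC : EuclideanSpace ℝ (Fin m) →L[ℝ] ℂ :=
    Complex.ofRealCLM.comp ((p * r2 ^ (p - 1)) • ((2:ℕ) • innerSL ℝ x)) with hcdC
  have hcC : HasFDerivAt (fun y : EuclideanSpace ℝ (Fin m) => (((1 + ‖y‖ ^ 2) ^ p : ℝ) : ℂ)) cdC x :=
    Complex.ofRealCLM.hasFDerivAt.comp x hcd
  set vd : (EuclideanSpace ℝ (Fin m)) →L[ℝ] (Fin ℓ → ℂ) :=
    ∑ j, (Complex.ofRealCLM.comp (EuclideanSpace.proj j)).smulRight (Complex.I • w j) with hvd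
  have hvdapp : ∀ y : EuclideanSpace ℝ (Fin m), vd y = ∑ j, ((y j : ℝ) : ℂ) • (Complex.I • w j) := by
    intro y
    rw [hvd, ContinuousLinearMap.sum_apply]
    exact Finset.sum_congr rfl fun j _ => by
      simp [ContinuousLinearMap.smulRight_apply]
  have hvfun : HasFDerivAt (fun y : EuclideanSpace ℝ (Fin m) => φ + vd y) vd x := vd.hasFDerivAt.const_add φ
  have hgd := hcC.smul hvfun
  set eS : (Fin ℓ → ℂ) →L[ℝ] EuclideanSpace ℂ (Fin ℓ) :=
    ((PiLp.continuousLinearEquiv 2 ℂ (fun _ : Fin ℓ => ℂ)).symm.toContinuousLinearMap).restrictScalars ℝ with heS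
  have hcomp := (eS.hasFDerivAt (x := (((1 + ‖x‖ ^ 2) ^ p : ℝ) : ℂ) • (φ + vd x))).comp x hgd
  have hfun : psiM hl γ =
      (fun z => eS z) ∘ (fun y : EuclideanSpace ℝ (Fin m) => (((1 + ‖y‖ ^ 2) ^ p : ℝ) : ℂ) • (φ + vd y)) := by
    funext y
    show (WithLp.equiv 2 (Fin ℓ → ℂ)).symm _ = _
    have h5 : ((1 : Matrix (Fin ℓ) (Fin ℓ) ℂ)
          + Complex.I • ∑ j, ((y j : ℝ) : ℂ) • γ j) *ᵥ (Pi.single (⟨0, hl⟩ : Fin ℓ) 1)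
        = φ + vd y := by
      rw [show (Pi.single (⟨0, hl⟩ : Fin ℓ) 1 : Fin ℓ → ℂ) = φ from rfl]
      rw [Matrix.add_mulVec, Matrix.one_mulVec, Matrix.smul_mulVec, sum_mulVec',
        hvdapp y]
      congr 1
      rw [Finset.smul_sum]
      exact Finset.sum_congr rfl fun j _ => by
        rw [Matrix.smul_mulVec, smul_comm]
    rw [h5]
    rfl
  have hpsifd : HasFDerivAt (psiM hl γ)
      (eS.comp ((((1 + ‖x‖ ^ 2) ^ p : ℝ) : ℂ) • vd + cdC.smulRight (φ + vd x))) x := by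
    rw [hfun]
    exact hcomp
  have hfd := hpsifd.fderiv
  set d : Fin m → ℝ := fun j => p * r2 ^ (p - 1) * (2 * x j) with hd
  have hvx : φ + vd x = v := by
    rw [hvdapp x, hv, hu', Finset.smul_sum]
    congr 1
    exact Finset.sum_congr rfl fun j _ => (smul_comm _ _ _).symm
  have hDj : ∀ j, (WithLp.equiv 2 (Fin ℓ → ℂ)) (fderiv ℝ (psiM hl γ) x (EuclideanSpace.single j 1))
      = (((1 + ‖x‖ ^ 2) ^ p : ℝ) : ℂ) • (Complex.I • w j) + ((d j : ℝ) : ℂ) • v := by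
    intro j
    rw [hfd]
    show ((((1 + ‖x‖ ^ 2) ^ p : ℝ) : ℂ) • vd + cdC.smulRight (φ + vd x))
        (EuclideanSpace.single j 1) = _
    rw [ContinuousLinearMap.add_apply, ContinuousLinearMap.smul_apply,
      ContinuousLinearMap.smulRight_apply, hvx]
    congr 1
    · congr 1
      rw [hvdapp, Finset.sum_eq_single j]
      · rw [EuclideanSpace.single_apply, if_pos rfl]
        norm_num
      · intro k _ hk
        rw [EuclideanSpace.single_apply, if_neg hk]
        norm_num
      · intro h; exact absurd (Finset.mem_univ j) h
    · congr 1
      rw [hcdC]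
      simp only [ContinuousLinearMap.comp_apply, ContinuousLinearMap.smul_apply,
        Complex.ofRealCLM_apply, innerSL_apply_apply, EuclideanSpace.inner_single_right]
      norm_num [hd]
  have hcs : c = s * r2 := by
    have h6 : r2 ^ (p - 1) * r2 ^ (1:ℝ) = r2 ^ (p - 1 + 1) := (Real.rpow_add hr2pos _ _).symm
    rw [Real.rpow_one] at h6
    rw [hc, hs, h6]
    norm_num
  have hterm : ∀ j, γ j *ᵥ (((c : ℝ) : ℂ) • (Complex.I • w j) + ((d j : ℝ) : ℂ) • v)
      = (((c : ℝ) : ℂ) * Complex.I) • φ + (((d j : ℝ) : ℂ) • w j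
        + (((d j : ℝ) : ℂ) * Complex.I) • ((γ j * A) *ᵥ φ)) := by
    intro j
    rw [Matrix.mulVec_add, Matrix.mulVec_smul, Matrix.mulVec_smul]
    congr 1
    · simp only [hw, Matrix.mulVec_smul, Matrix.mulVec_mulVec, hγsq, Matrix.one_mulVec,
        smul_smul]
    · rw [hv, Matrix.mulVec_smul, Matrix.mulVec_add, hu, Matrix.mulVec_smul,
        Matrix.mulVec_mulVec, smul_add, smul_smul]
  have hsum2 : ∑ j, ((x j : ℝ) : ℂ) • ((γ j * A) *ᵥ φ) = ((‖x‖ ^ 2 : ℝ) : ℂ) • φ := by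
    have h7 : ∑ j, ((x j : ℝ) : ℂ) • ((γ j * A) *ᵥ φ)
        = ((∑ j, ((x j : ℝ) : ℂ) • γ j) * A) *ᵥ φ := by
      rw [Finset.sum_mul, sum_mulVec']
      exact Finset.sum_congr rfl fun j _ => by
        rw [smul_mul_assoc, Matrix.smul_mulVec]
    rw [h7, ← hA, hAsq, Matrix.smul_mulVec, Matrix.one_mulVec]
  have hT : ∑ j, γ j *ᵥ (((c : ℝ) : ℂ) • (Complex.I • w j) + ((d j : ℝ) : ℂ) • v)
      = (((c : ℝ) : ℂ) * Complex.I * (m : ℂ)) • φ + (((p * s * 2 : ℝ) : ℂ) • u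
        + (((p * s * 2 : ℝ) : ℂ) * Complex.I * ((‖x‖ ^ 2 : ℝ) : ℂ)) • φ) := by
    rw [Finset.sum_congr rfl fun j _ => hterm j, Finset.sum_add_distrib, Finset.sum_const,
      Finset.card_univ, Fintype.card_fin, Finset.sum_add_distrib]
    congr 1
    · rw [← Nat.cast_smul_eq_nsmul ℂ, smul_smul]
      congr 1
      ring
    congr 1
    · rw [hu', Finset.smul_sum]
      refine Finset.sum_congr rfl fun j _ => ?_
      rw [smul_smul]
      congr 1
      push_cast [hd, hs]
      ring
    · have h8 : ∀ j : Fin m, (((d j : ℝ) : ℂ) * Complex.I) • ((γ j * A) *ᵥ φ)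
          = (((p * s * 2 : ℝ) : ℂ) * Complex.I) • (((x j : ℝ) : ℂ) • ((γ j * A) *ᵥ φ)) := by
        intro j
        rw [smul_smul]
        congr 1
        push_cast [hd, hs]
        ring
      rw [Finset.sum_congr rfl fun j _ => h8 j, ← Finset.smul_sum, hsum2, smul_smul]
  have part2 : gammaP γ (psiM hl γ) x = ((m / (1 + ‖x‖ ^ 2) : ℝ)) • psiM hl γ x := by
    rw [gammaP]
    simp only [hDj]
    rw [← hr2, ← hc]
    rw [hT, hpsix]
    have hsm : ((m / r2 : ℝ)) • (WithLp.equiv 2 (Fin ℓ → ℂ)).symm (((c : ℝ) : ℂ) • v)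
        = (WithLp.equiv 2 (Fin ℓ → ℂ)).symm (((m / r2 : ℝ)) • (((c : ℝ) : ℂ) • v)) := rfl
    rw [hsm]
    congr 1
    funext i
    simp only [Pi.smul_apply, Pi.add_apply, smul_eq_mul, Complex.real_smul, hv, hcs]
    push_cast
    have hI := Complex.I_sq
    have hr2ne : (r2 : ℂ) ≠ 0 := by
      exact_mod_cast hr2pos.ne'
    field_simp
    ring_nf
    push_cast
    rw [Complex.I_sq]
    rw [hp, hr2]; push_cast; ring
  exact ⟨part1, part2⟩

end
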